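/- If the edgewise subdivision sd X of a simplicial set X is Segal, then the upper décalage dec_⊤X is Segal. -/

import Mathlib

open CategoryTheory Simplicial

universe u

/-- A commuting square of sets (top `f`, left `g`, right `h`, bottom `k`) is a pullback
if the canonical map to the fiber product is a bijection. -/
def IsPullbackSet {A B C D : Type u} (f : A → B) (g : A → C) (h : B → D) (k : C → D) : Prop :=
  (∀ a, h (f a) = k (g a)) ∧ ∀ (b : B) (c : C), h b = k c → ∃! a : A, f a = b ∧ g a = c

/-- The Segal condition for the edgewise subdivision `sd X` (which has `(sd X)_n = X_{2n+1}`,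
with `i`-th face `d_{n-i} ∘ d_{n+i+1} : X_{2n+1} → X_{2n-1}` for `0 ≤ i ≤ n`), stated
explicitly in terms of `X`: for every `n ≥ 1` (here `n = m + 1`), the Segal square of `sd X`
with top `d_0`, left `d_{n+1}`, right `d_n`, bottom `d_0` is the square with
top `d_{m+2} ∘ d_{m+3} : X_{2m+5} → X_{2m+3}`, left `d_0 ∘ d_{2m+5} : X_{2m+5} → X_{2m+3}`,
right `d_0 ∘ d_{2m+3} : X_{2m+3} → X_{2m+1}`, bottom `d_{m+1} ∘ d_{m+2}`. -/
def SdSegal (X : SSet.{u}) : Prop :=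
  ∀ m : ℕ,
    IsPullbackSet
      (fun x => X.δ (⟨m + 2, by omega⟩ : Fin (2 * m + 5))
        (X.δ (⟨m + 3, by omega⟩ : Fin (2 * m + 6)) x))
      (fun x => X.δ (⟨0, by omega⟩ : Fin (2 * m + 5))
        (X.δ (⟨2 * m + 5, by omega⟩ : Fin (2 * m + 6)) x))
      (fun x => X.δ (⟨0, by omega⟩ : Fin (2 * m + 3))
        (X.δ (⟨2 * m + 3, by omega⟩ : Fin (2 * m + 4)) x))
      (fun x => X.δ (⟨m + 1, by omega⟩ : Fin (2 * m + 3))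
        (X.δ (⟨m + 2, by omega⟩ : Fin (2 * m + 4)) x))

/-- The Segal condition for the upper décalage `dec⊤ X` (which has `(dec⊤ X)_n = X_{n+1}`,
with `k`-th face `d_k : X_{n+1} → X_n` for `0 ≤ k ≤ n`), stated explicitly in terms of `X`. -/
def UpperDecSegal (X : SSet.{u}) : Prop :=
  ∀ m : ℕ,
    IsPullbackSet
      (fun x => X.δ (0 : Fin (m + 4)) x)
      (fun x => X.δ (⟨m + 2, by omega⟩ : Fin (m + 4)) x)
      (fun x => X.δ (⟨m + 1, by omega⟩ : Fin (m + 3)) x)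
      (fun x => X.δ (0 : Fin (m + 3)) x)

namespace SdDecAux

open SimplexCategory Opposite

/-- Build a morphism of `SimplexCategory` from an explicit function on `ℕ`. -/
def mkH (k l : ℕ) (f : ℕ → ℕ) (hm : ∀ i j : ℕ, i ≤ j → f i ≤ f j)
    (hb : ∀ i : ℕ, i ≤ k → f i ≤ l) : (⦋k⦌ : SimplexCategory) ⟶ ⦋l⦌ :=
  SimplexCategory.mkHom
    ⟨fun i => ⟨f i.1, Nat.lt_succ_of_le (hb i.1 (Nat.lt_succ_iff.mp i.2))⟩,
     fun i j hij => hm i.1 j.1 hij⟩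

lemma mkH_val {k l : ℕ} {f : ℕ → ℕ} {hm hb} (i : Fin (k+1)) :
    (((mkH k l f hm hb).toOrderHom) i).1 = f i.1 := rfl

lemma δ_val {n : ℕ} (i : Fin (n+2)) (j : Fin (n+1)) :
    ((SimplexCategory.δ i).toOrderHom j).1 = if j.1 < i.1 then j.1 else j.1 + 1 := by
  simp [SimplexCategory.δ, Fin.succAbove, Fin.lt_def]
  split_ifs <;> simp

lemma hom_ext_nat {a b : SimplexCategory} (F G : a ⟶ b)
    (w : ∀ i : Fin (a.len+1), (F.toOrderHom i).1 = (G.toOrderHom i).1) : F = G := by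
  apply SimplexCategory.Hom.ext
  apply OrderHom.ext
  funext i
  exact Fin.ext (w i)

lemma map_map (X : SSet.{u}) {a b c : SimplexCategory} (F : a ⟶ b) (G : b ⟶ c)
    (x : X.obj (op c)) : X.map F.op (X.map G.op x) = X.map (F ≫ G).op x := by
  rw [CategoryTheory.op_comp, FunctorToTypes.map_comp_apply]

lemma δ_apply (X : SSet.{u}) {n : ℕ} (i : Fin (n+2)) (x : X _⦋n+1⦌) :
    X.δ i x = X.map (SimplexCategory.δ i).op x := rfl

variable (m : ℕ)

/-- `T = c ∘ wT` : the degenerate top face used for existence. -/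
def wT : (⦋2*m+5⦌ : SimplexCategory) ⟶ ⦋m+2⦌ :=
  mkH _ _ (fun p => if p = 0 then 0 else if p = 1 then 1 else if p ≤ m+3 then p-1 else m+2)
    (by intro i j hij; split_ifs <;> omega)
    (by intro i hi; split_ifs <;> omega)

/-- `I = b ∘ wI` : the degenerate inner face used for existence. -/
def wI : (⦋2*m+5⦌ : SimplexCategory) ⟶ ⦋m+2⦌ :=
  mkH _ _ (fun p => if p ≤ 1 then 0 else if p ≤ m+2 then p-1 else if p = m+3 then m+1 else m+2)
    (by intro i j hij; split_ifs <;> omega)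
    (by intro i hi; split_ifs <;> omega)

/-- the common collapse map for the matching condition. -/
def uu : (⦋2*m+3⦌ : SimplexCategory) ⟶ ⦋m+1⦌ :=
  mkH _ _ (fun p => if p ≤ m+2 then p-1 else m+1)
    (by intro i j hij; split_ifs <;> omega)
    (by intro i hi; split_ifs <;> omega)

/-- extraction of `a` from the glued simplex `D`. -/
def rh : (⦋m+3⦌ : SimplexCategory) ⟶ ⦋2*m+7⦌ :=
  mkH _ _ (fun v => if v ≤ 1 then v else if v ≤ m+2 then v+1 else m+5)
    (by intro i j hij; split_ifs <;> omega)
    (by intro i hi; split_ifs <;> omega)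

def qI : (⦋m+2⦌ : SimplexCategory) ⟶ ⦋2*m+5⦌ :=
  mkH _ _ (fun p => if p = 0 then 0 else if p ≤ m+1 then p+1 else m+4)
    (by intro i j hij; split_ifs <;> omega)
    (by intro i hi; split_ifs <;> omega)

def qT : (⦋m+2⦌ : SimplexCategory) ⟶ ⦋2*m+5⦌ :=
  mkH _ _ (fun p => if p ≤ 1 then p else if p ≤ m+1 then p+1 else m+3)
    (by intro i j hij; split_ifs <;> omega)
    (by intro i hi; split_ifs <;> omega)

/-- the degeneracy comparison map used for uniqueness. -/
def vV : (⦋2*m+5⦌ : SimplexCategory) ⟶ ⦋m+3⦌ :=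
  mkH _ _ (fun p => if p ≤ m+1 then p else if p ≤ m+3 then m+2 else m+3)
    (by intro i j hij; split_ifs <;> omega)
    (by intro i hi; split_ifs <;> omega)

def tt : (⦋2*m+3⦌ : SimplexCategory) ⟶ ⦋m+2⦌ :=
  mkH _ _ (fun j => if j ≤ m+2 then j else m+2)
    (by intro i j hij; split_ifs <;> omega)
    (by intro i hi; split_ifs <;> omega)

def ss : (⦋2*m+3⦌ : SimplexCategory) ⟶ ⦋m+2⦌ :=
  mkH _ _ (fun j => if j ≤ m+1 then j else if j ≤ m+2 then m+1 else m+2)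
    (by intro i j hij; split_ifs <;> omega)
    (by intro i hi; split_ifs <;> omega)

def r2 : (⦋m+3⦌ : SimplexCategory) ⟶ ⦋2*m+5⦌ :=
  mkH _ _ (fun v => if v ≤ m+2 then v else m+4)
    (by intro i j hij; split_ifs <;> omega)
    (by intro i hi; split_ifs <;> omega)

-- commutativity of the décalage square
lemma E0 : SimplexCategory.δ (⟨m+1, by omega⟩ : Fin (m+3)) ≫ SimplexCategory.δ (0 : Fin (m+4)) =
    SimplexCategory.δ (0 : Fin (m+3)) ≫ SimplexCategory.δ (⟨m+2, by omega⟩ : Fin (m+4)) := by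
  apply hom_ext_nat; intro i
  have hi := i.isLt; simp only [SimplexCategory.len_mk] at hi
  simp only [comp_toOrderHom, OrderHom.comp_coe, Function.comp_apply, δ_val, Fin.val_zero]
  split_ifs at * <;> grind

-- matching conditions for existence
lemma E1 : SimplexCategory.δ (⟨0, by omega⟩ : Fin (2*m+5)) ≫
      SimplexCategory.δ (⟨2*m+5, by omega⟩ : Fin (2*m+6)) ≫ wT m =
    uu m ≫ SimplexCategory.δ (0 : Fin (m+3)) := by
  apply hom_ext_nat; intro i
  have hi := i.isLt; simp only [SimplexCategory.len_mk] at hi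
  simp only [comp_toOrderHom, OrderHom.comp_coe, Function.comp_apply, δ_val, mkH_val,
    Fin.val_zero, wT, uu]
  split_ifs at * <;> omega

lemma E2 : SimplexCategory.δ (⟨m+2, by omega⟩ : Fin (2*m+5)) ≫
      SimplexCategory.δ (⟨m+3, by omega⟩ : Fin (2*m+6)) ≫ wI m =
    uu m ≫ SimplexCategory.δ (⟨m+1, by omega⟩ : Fin (m+3)) := by
  apply hom_ext_nat; intro i
  have hi := i.isLt; simp only [SimplexCategory.len_mk] at hi
  simp only [comp_toOrderHom, OrderHom.comp_coe, Function.comp_apply, δ_val, mkH_val,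
    Fin.val_zero, wI, uu]
  split_ifs at * <;> omega

-- extraction identities for existence
lemma E3 : SimplexCategory.δ (0 : Fin (m+4)) ≫ rh m =
    qI m ≫ SimplexCategory.δ (⟨0, by omega⟩ : Fin (2*m+7)) ≫
      SimplexCategory.δ (⟨2*m+7, by omega⟩ : Fin (2*m+8)) := by
  apply hom_ext_nat; intro i
  have hi := i.isLt; simp only [SimplexCategory.len_mk] at hi
  simp only [comp_toOrderHom, OrderHom.comp_coe, Function.comp_apply, δ_val, mkH_val,
    Fin.val_zero, rh, qI]
  split_ifs at * <;> grind

lemma E4 : qI m ≫ wI m = 𝟙 (⦋m+2⦌ : SimplexCategory) := by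
  apply hom_ext_nat; intro i
  have hi := i.isLt; simp only [SimplexCategory.len_mk] at hi
  simp only [comp_toOrderHom, OrderHom.comp_coe, Function.comp_apply, mkH_val, qI, wI,
    SimplexCategory.id_toOrderHom, OrderHom.id_coe, id_eq]
  split_ifs at * <;> omega

lemma E5 : SimplexCategory.δ (⟨m+2, by omega⟩ : Fin (m+4)) ≫ rh m =
    qT m ≫ SimplexCategory.δ (⟨m+3, by omega⟩ : Fin (2*m+7)) ≫
      SimplexCategory.δ (⟨m+4, by omega⟩ : Fin (2*m+8)) := by
  apply hom_ext_nat; intro i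
  have hi := i.isLt; simp only [SimplexCategory.len_mk] at hi
  simp only [comp_toOrderHom, OrderHom.comp_coe, Function.comp_apply, δ_val, mkH_val, rh, qT]
  split_ifs at * <;> omega

lemma E6 : qT m ≫ wT m = 𝟙 (⦋m+2⦌ : SimplexCategory) := by
  apply hom_ext_nat; intro i
  have hi := i.isLt; simp only [SimplexCategory.len_mk] at hi
  simp only [comp_toOrderHom, OrderHom.comp_coe, Function.comp_apply, mkH_val, qT, wT,
    SimplexCategory.id_toOrderHom, OrderHom.id_coe, id_eq]
  split_ifs at * <;> omega

-- identities for uniqueness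
lemma E7 : SimplexCategory.δ (⟨m+2, by omega⟩ : Fin (2*m+5)) ≫
      SimplexCategory.δ (⟨m+3, by omega⟩ : Fin (2*m+6)) ≫ vV m =
    tt m ≫ SimplexCategory.δ (⟨m+2, by omega⟩ : Fin (m+4)) := by
  apply hom_ext_nat; intro i
  have hi := i.isLt; simp only [SimplexCategory.len_mk] at hi
  simp only [comp_toOrderHom, OrderHom.comp_coe, Function.comp_apply, δ_val, mkH_val, vV, tt]
  split_ifs at * <;> omega

lemma E8 : SimplexCategory.δ (⟨0, by omega⟩ : Fin (2*m+5)) ≫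
      SimplexCategory.δ (⟨2*m+5, by omega⟩ : Fin (2*m+6)) ≫ vV m =
    ss m ≫ SimplexCategory.δ (0 : Fin (m+4)) := by
  apply hom_ext_nat; intro i
  have hi := i.isLt; simp only [SimplexCategory.len_mk] at hi
  simp only [comp_toOrderHom, OrderHom.comp_coe, Function.comp_apply, δ_val, mkH_val,
    Fin.val_zero, vV, ss]
  split_ifs at * <;> omega

lemma E9 : r2 m ≫ vV m = 𝟙 (⦋m+3⦌ : SimplexCategory) := by
  apply hom_ext_nat; intro i
  have hi := i.isLt; simp only [SimplexCategory.len_mk] at hi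
  simp only [comp_toOrderHom, OrderHom.comp_coe, Function.comp_apply, mkH_val, r2, vV,
    SimplexCategory.id_toOrderHom, OrderHom.id_coe, id_eq]
  split_ifs at * <;> omega

end SdDecAux

open SdDecAux Opposite in
/-- If the edgewise subdivision `sd X` of a simplicial set `X` is Segal, then the upper
décalage `dec⊤ X` is Segal. -/
theorem sdSegal_implies_upperDecSegal (X : SSet.{u}) (h : SdSegal X) : UpperDecSegal X := by
  intro m
  constructor
  · -- commutativity of the décalage square
    intro a
    simp only [δ_apply, map_map]
    rw [E0]
  · intro b c hbc
    -- hbc : X.δ ⟨m+1⟩ b = X.δ 0 c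
    -- === the comparison maps for uniqueness ===
    -- for any y with δ₀ y = b, δ_{m+2} y = c, the degenerate simplex X.map (vV m).op y
    -- has prescribed structural faces in the sd square at level m
    have hfV : ∀ y : X _⦋m+3⦌, X.δ (⟨m+2, by omega⟩ : Fin (m+4)) y = c →
        X.δ (⟨m+2, by omega⟩ : Fin (2*m+5)) (X.δ (⟨m+3, by omega⟩ : Fin (2*m+6))
          (X.map (vV m).op y)) = X.map (tt m).op c := by
      intro y hy
      rw [← hy]
      simp only [δ_apply, map_map]
      rw [E7, ← map_map]
    have hgV : ∀ y : X _⦋m+3⦌, X.δ (0 : Fin (m+4)) y = b →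
        X.δ (⟨0, by omega⟩ : Fin (2*m+5)) (X.δ (⟨2*m+5, by omega⟩ : Fin (2*m+6))
          (X.map (vV m).op y)) = X.map (ss m).op b := by
      intro y hy
      rw [← hy]
      simp only [δ_apply, map_map]
      rw [E8, ← map_map]
    have hrec : ∀ y : X _⦋m+3⦌, X.map (r2 m).op (X.map (vV m).op y) = y := by
      intro y
      rw [map_map, E9]
      simp
    -- === existence ===
    -- matching condition for the sd square at level m+1
    have hmatch : X.δ (⟨0, by omega⟩ : Fin (2*m+5)) (X.δ (⟨2*m+5, by omega⟩ : Fin (2*m+6))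
          (X.map (wT m).op c)) =
        X.δ (⟨m+2, by omega⟩ : Fin (2*m+5)) (X.δ (⟨m+3, by omega⟩ : Fin (2*m+6))
          (X.map (wI m).op b)) := by
      have hbc' : X.δ (⟨m+1, by omega⟩ : Fin (m+3)) b = X.δ (0 : Fin (m+3)) c := hbc
      simp only [δ_apply, map_map]
      rw [E1, E2, ← map_map, ← map_map, ← δ_apply, ← δ_apply, ← hbc']
    obtain ⟨D, ⟨hDT, hDI⟩, -⟩ := (h (m+1)).2 (X.map (wT m).op c) (X.map (wI m).op b) hmatch
    have hDT' : X.δ (⟨m+3, by omega⟩ : Fin (2*m+7)) (X.δ (⟨m+4, by omega⟩ : Fin (2*m+8)) D) =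
        X.map (wT m).op c := hDT
    have hDI' : X.δ (⟨0, by omega⟩ : Fin (2*m+7)) (X.δ (⟨2*m+7, by omega⟩ : Fin (2*m+8)) D) =
        X.map (wI m).op b := hDI
    set a : X _⦋m+3⦌ := X.map (rh m).op D with ha
    have claim1 : X.δ (0 : Fin (m+4)) a = b := by
      rw [ha, δ_apply, map_map, E3, ← map_map, ← map_map, ← δ_apply, ← δ_apply,
        hDI', map_map, E4]
      simp
    have claim2 : X.δ (⟨m+2, by omega⟩ : Fin (m+4)) a = c := by
      rw [ha, δ_apply, map_map, E5, ← map_map, ← map_map, ← δ_apply, ← δ_apply,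
        hDT', map_map, E6]
      simp
    -- === uniqueness ===
    have hmatch0 : X.δ (⟨0, by omega⟩ : Fin (2*m+3)) (X.δ (⟨2*m+3, by omega⟩ : Fin (2*m+4))
          (X.map (tt m).op c)) =
        X.δ (⟨m+1, by omega⟩ : Fin (2*m+3)) (X.δ (⟨m+2, by omega⟩ : Fin (2*m+4))
          (X.map (ss m).op b)) := by
      rw [← hfV a claim2, ← hgV a claim1]
      exact (h m).1 (X.map (vV m).op a)
    obtain ⟨A₀, -, hA₀uniq⟩ := (h m).2 (X.map (tt m).op c) (X.map (ss m).op b) hmatch0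
    refine ⟨a, ⟨claim1, claim2⟩, ?_⟩
    intro y ⟨hy1, hy2⟩
    have h1 : X.map (vV m).op y = A₀ := hA₀uniq _ ⟨hfV y hy2, hgV y hy1⟩
    have h2 : X.map (vV m).op a = A₀ := hA₀uniq _ ⟨hfV a claim2, hgV a claim1⟩
    rw [← hrec y, ← hrec a, h1, h2]
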